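/- Assume additionally that 𝒩_m and 𝒩_n are disjoint and that the closed disks bounded by C_m and C_n are disjoint. Then (1/(2πi))² ∮_{C_m} ( ∮_{C_n} ( −B(z₁) B(z₂) / (z₁ − z₂)² ) dz₂ ) dz₁ = −(1/K²) Σ_{k ∈ 𝒩_m} Σ_{l ∈ 𝒩_n} ρ̂_k² ρ̂_l² / (ρ̂_k − ρ̂_l)². -/

import Mathlib

open scoped Real

open Metric Complex Set

/-- Circle integral of a finite sum is the sum of the circle integrals. -/
lemma circleIntegral_finsetSum {ι : Type*} (s : Finset ι) {c : ℂ} {R : ℝ}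
    (f : ι → ℂ → ℂ) (h : ∀ i ∈ s, CircleIntegrable (f i) c R) :
    (∮ z in C(c, R), ∑ i ∈ s, f i z) = ∑ i ∈ s, ∮ z in C(c, R), f i z := by
  simp only [circleIntegral, Finset.smul_sum]
  rw [intervalIntegral.integral_finset_sum]
  intro i hi
  exact (h i hi).out

/-- Circle integral of a sum is the sum of the circle integrals. -/
lemma circleIntegral_add' {f g : ℂ → ℂ} {c : ℂ} {R : ℝ}
    (hf : CircleIntegrable f c R) (hg : CircleIntegrable g c R) :
    (∮ z in C(c, R), (f z + g z)) = (∮ z in C(c, R), f z) + ∮ z in C(c, R), g z := by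
  simp only [circleIntegral, smul_add]
  exact intervalIntegral.integral_add hf.out hg.out

/-- Key residue computation: the circle integral of `B z * ((a - z)^2)⁻¹` where `B` has
partial fraction decomposition with simple poles at the `ρ i`, the poles indexed by `S`
lie inside the circle, the other poles lie outside the closed disk, and `a` lies outside
the closed disk. -/
lemma key_integral (N K : ℕ) (ρ : Fin N → ℝ) (B : ℂ → ℂ)
    (hB : ∀ z : ℂ, (∀ i, z ≠ (ρ i : ℂ)) →
      B z = (∑ i, (ρ i : ℂ)) / K + (((N : ℂ) - K) / K) * z +
        ∑ i, (ρ i : ℂ) ^ 2 / K * (z - (ρ i : ℂ))⁻¹)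
    (S : Finset (Fin N)) (x : ℝ) (R : ℝ) (hR : 0 < R) (a : ℂ)
    (ha : a ∉ closedBall (x : ℂ) R)
    (hin : ∀ i ∈ S, ((ρ i : ℂ)) ∈ ball (x : ℂ) R)
    (hout : ∀ i ∉ S, ((ρ i : ℂ)) ∉ closedBall (x : ℂ) R)
    (hsph : ∀ i, ((ρ i : ℂ)) ∉ sphere (x : ℂ) R) :
    (∮ z in C((x : ℂ), R), B z * ((a - z) ^ 2)⁻¹) =
      (2 * (π : ℂ) * Complex.I) * ∑ i ∈ S, (ρ i : ℂ) ^ 2 / K * ((a - (ρ i : ℂ)) ^ 2)⁻¹ := by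
  classical
  set g : ℂ → ℂ := fun z =>
    ((∑ i, (ρ i : ℂ)) / K + (((N : ℂ) - K) / K) * z +
      ∑ i ∈ Sᶜ, (ρ i : ℂ) ^ 2 / K * (z - (ρ i : ℂ))⁻¹) * ((a - z) ^ 2)⁻¹ with hg
  set f : Fin N → ℂ → ℂ := fun i z =>
    (z - (ρ i : ℂ))⁻¹ • ((ρ i : ℂ) ^ 2 / K * ((a - z) ^ 2)⁻¹) with hf
  -- `a - z ≠ 0` on the closed ball
  have haz : ∀ z ∈ closedBall (x : ℂ) R, a - z ≠ 0 := by
    intro z hz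
    exact sub_ne_zero.2 fun h => ha (h ▸ hz)
  -- differentiability of g on the closed ball
  have hgdiff : ∀ z ∈ closedBall (x : ℂ) R, DifferentiableAt ℂ g z := by
    intro z hz
    apply DifferentiableAt.mul
    · apply DifferentiableAt.add
      · exact (differentiableAt_const _).add ((differentiableAt_const _).mul differentiableAt_id)
      · apply DifferentiableAt.fun_sum
        intro i hi
        have hne : z - (ρ i : ℂ) ≠ 0 :=
          sub_ne_zero.2 fun h => hout i (by simpa using hi) (h ▸ hz)
        exact (((differentiableAt_id (x := z)).sub_const (ρ i : ℂ)).inv hne).const_mul ((ρ i : ℂ) ^ 2 / K)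
    · exact (((differentiableAt_const a).sub differentiableAt_id).pow 2).inv
        (pow_ne_zero 2 (haz z hz))
  -- the integrand agrees with `g + ∑ i ∈ S, f i` on the sphere
  have heq : Set.EqOn (fun z => B z * ((a - z) ^ 2)⁻¹)
      (fun z => g z + ∑ i ∈ S, f i z) (sphere (x : ℂ) R) := by
    intro z hz
    have hzρ : ∀ i, z ≠ (ρ i : ℂ) := fun i => ne_of_mem_of_not_mem hz (hsph i)
    simp only [hg, hf, smul_eq_mul]
    rw [hB z hzρ, ← Finset.sum_add_sum_compl S (fun i => (ρ i : ℂ) ^ 2 / K * (z - (ρ i : ℂ))⁻¹)]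
    have h1 : (∑ i ∈ S, (ρ i : ℂ) ^ 2 / K * (z - (ρ i : ℂ))⁻¹) * ((a - z) ^ 2)⁻¹
        = ∑ i ∈ S, (z - (ρ i : ℂ))⁻¹ * ((ρ i : ℂ) ^ 2 / K * ((a - z) ^ 2)⁻¹) := by
      rw [Finset.sum_mul]
      exact Finset.sum_congr rfl fun i _ => by ring
    rw [← h1]
    ring
  -- continuity of each piece on the sphere
  have hfcont : ∀ i ∈ S, ContinuousOn (f i) (sphere (x : ℂ) R) := by
    intro i hi
    intro z hz
    have hz' := sphere_subset_closedBall hz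
    have hne : z - (ρ i : ℂ) ≠ 0 := sub_ne_zero.2 (ne_of_mem_of_not_mem hz (hsph i))
    apply ContinuousWithinAt.fun_smul
    · exact ((continuousAt_id.sub continuousAt_const).inv₀ hne).continuousWithinAt
    · exact ((continuousAt_const.mul (((continuousAt_const.sub continuousAt_id).pow 2).inv₀
        (pow_ne_zero 2 (haz z hz'))))).continuousWithinAt
  have hgint : CircleIntegrable g (x : ℂ) R :=
    ContinuousOn.circleIntegrable hR.le fun z hz =>
      ((hgdiff z (sphere_subset_closedBall hz)).continuousAt).continuousWithinAt
  have hfint : ∀ i ∈ S, CircleIntegrable (f i) (x : ℂ) R := fun i hi =>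
    ContinuousOn.circleIntegrable hR.le (hfcont i hi)
  have hsumint : CircleIntegrable (fun z => ∑ i ∈ S, f i z) (x : ℂ) R :=
    ContinuousOn.circleIntegrable hR.le (continuousOn_finset_sum S hfcont)
  -- compute
  rw [circleIntegral.integral_congr hR.le heq]
  rw [circleIntegral_add' hgint hsumint]
  rw [circleIntegral_finsetSum S f hfint]
  have hzero : (∮ z in C((x : ℂ), R), g z) = 0 := by
    apply Complex.circleIntegral_eq_zero_of_differentiable_on_off_countable hR.le
      Set.countable_empty
    · exact fun z hz => (hgdiff z hz).continuousAt.continuousWithinAt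
    · exact fun z hz => hgdiff z (ball_subset_closedBall hz.1)
  rw [hzero, zero_add]
  rw [Finset.mul_sum]
  apply Finset.sum_congr rfl
  intro i hi
  have hd : DifferentiableOn ℂ (fun z => (ρ i : ℂ) ^ 2 / K * ((a - z) ^ 2)⁻¹)
      (closedBall (x : ℂ) R) := by
    intro z hz
    exact (((((differentiableAt_const a).sub differentiableAt_id).pow 2).inv
      (pow_ne_zero 2 (haz z hz))).const_mul _).differentiableWithinAt
  have hres := hd.circleIntegral_sub_inv_smul (hin i hi)
  rw [hf]
  simp only [smul_eq_mul] at hres ⊢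
  rw [hres]

/-- Proposition 1 of the paper (case `m ≠ n`, eq. (91)): the evaluation of the double contour
integral `I₂ = (1/(2πi))² ∮∮ −B(z₁)B(z₂)/(z₁−z₂)² dz₂ dz₁` over two circles with disjoint
closed disks, each enclosing exactly the eigenvalues indexed by `𝒩_m` resp. `𝒩_n`. -/
theorem I2_off_diagonal
    (N K : ℕ) (hN : 0 < N) (hNK : N ≤ K)
    (ρ : Fin N → ℝ) (hρ : ∀ i, 0 < ρ i) (hinj : Function.Injective ρ)
    (B : ℂ → ℂ)
    (hB : ∀ z, B z = -(1 / (K : ℂ)) * ∑ i, (ρ i : ℂ) * z / ((ρ i : ℂ) - z) -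
        (((K : ℂ) - (N : ℂ)) / (K : ℂ)) * z)
    (𝒩m 𝒩n : Finset (Fin N)) (hdisj : Disjoint 𝒩m 𝒩n)
    (xm xn Rm Rn : ℝ) (hRm : 0 < Rm) (hRn : 0 < Rn)
    (hmem_m : ∀ i, |ρ i - xm| < Rm ↔ i ∈ 𝒩m)
    (hmem_n : ∀ i, |ρ i - xn| < Rn ↔ i ∈ 𝒩n)
    (hoff_m : ∀ i, |ρ i - xm| ≠ Rm)
    (hoff_n : ∀ i, |ρ i - xn| ≠ Rn)
    (hballs : Disjoint (Metric.closedBall (xm : ℂ) Rm) (Metric.closedBall (xn : ℂ) Rn)) :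
    (1 / (2 * (π : ℂ) * Complex.I)) ^ 2 *
        (∮ z₁ in C((xm : ℂ), Rm), ∮ z₂ in C((xn : ℂ), Rn),
          -(B z₁ * B z₂) / (z₁ - z₂) ^ 2) =
      -(1 / (K : ℂ) ^ 2) *
        ∑ k ∈ 𝒩m, ∑ l ∈ 𝒩n,
          (ρ k : ℂ) ^ 2 * (ρ l : ℂ) ^ 2 / ((ρ k : ℂ) - (ρ l : ℂ)) ^ 2 := by
  classical
  have hK0 : (0 : ℕ) < K := lt_of_lt_of_le hN hNK
  have hK : (K : ℂ) ≠ 0 := Nat.cast_ne_zero.2 hK0.ne'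
  -- distance computations
  have hdist : ∀ (i : Fin N) (x : ℝ), dist ((ρ i : ℂ)) ((x : ℂ)) = |ρ i - x| := by
    intro i x
    rw [Complex.dist_eq, ← Complex.ofReal_sub, Complex.norm_real, Real.norm_eq_abs]
  -- partial fraction decomposition of B
  have hBalt : ∀ z : ℂ, (∀ i, z ≠ (ρ i : ℂ)) →
      B z = (∑ i, (ρ i : ℂ)) / K + (((N : ℂ) - K) / K) * z +
        ∑ i, (ρ i : ℂ) ^ 2 / K * (z - (ρ i : ℂ))⁻¹ := by
    intro z hz
    rw [hB z, Finset.mul_sum]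
    rw [Finset.sum_congr rfl (fun i _ => show
        -(1 / (K : ℂ)) * ((ρ i : ℂ) * z / ((ρ i : ℂ) - z)) =
          (ρ i : ℂ) / K + (ρ i : ℂ) ^ 2 / K * (z - (ρ i : ℂ))⁻¹ by
      have h2 : (ρ i : ℂ) - z ≠ 0 := sub_ne_zero.2 fun h => hz i h.symm
      have h3 : z - (ρ i : ℂ) ≠ 0 := sub_ne_zero.2 (hz i)
      field_simp
      ring)]
    rw [Finset.sum_add_distrib, ← Finset.sum_div]
    ring
  -- sphere/ball membership facts
  have hsph_m : ∀ i, ((ρ i : ℂ)) ∉ sphere (xm : ℂ) Rm := by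
    intro i h
    exact hoff_m i (by rwa [mem_sphere, hdist] at h)
  have hsph_n : ∀ i, ((ρ i : ℂ)) ∉ sphere (xn : ℂ) Rn := by
    intro i h
    exact hoff_n i (by rwa [mem_sphere, hdist] at h)
  have hin_m : ∀ i ∈ 𝒩m, ((ρ i : ℂ)) ∈ ball (xm : ℂ) Rm := by
    intro i hi
    rw [mem_ball, hdist]
    exact (hmem_m i).2 hi
  have hin_n : ∀ i ∈ 𝒩n, ((ρ i : ℂ)) ∈ ball (xn : ℂ) Rn := by
    intro i hi
    rw [mem_ball, hdist]
    exact (hmem_n i).2 hi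
  have hout_m : ∀ i ∉ 𝒩m, ((ρ i : ℂ)) ∉ closedBall (xm : ℂ) Rm := by
    intro i hi h
    rw [mem_closedBall, hdist] at h
    rcases lt_or_eq_of_le h with h' | h'
    · exact hi ((hmem_m i).1 h')
    · exact hoff_m i h'
  have hout_n : ∀ i ∉ 𝒩n, ((ρ i : ℂ)) ∉ closedBall (xn : ℂ) Rn := by
    intro i hi h
    rw [mem_closedBall, hdist] at h
    rcases lt_or_eq_of_le h with h' | h'
    · exact hi ((hmem_n i).1 h')
    · exact hoff_n i h'
  -- continuity of B on the sphere C_m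
  have hBcont : ContinuousOn B (sphere (xm : ℂ) Rm) := by
    have hgc : ContinuousOn (fun z : ℂ => (∑ i, (ρ i : ℂ)) / K + (((N : ℂ) - K) / K) * z +
        ∑ i, (ρ i : ℂ) ^ 2 / K * (z - (ρ i : ℂ))⁻¹) (sphere (xm : ℂ) Rm) := by
      apply ContinuousOn.add
      · exact continuousOn_const.add (continuousOn_const.mul continuousOn_id)
      · apply continuousOn_finset_sum
        intro i _
        apply ContinuousOn.mul continuousOn_const
        apply ContinuousOn.inv₀ (continuousOn_id.sub continuousOn_const)
        intro z hz
        exact sub_ne_zero.2 (ne_of_mem_of_not_mem hz (hsph_m i))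
    exact hgc.congr fun z hz => hBalt z fun i => ne_of_mem_of_not_mem hz (hsph_m i)
  -- the inner integral
  have inner : ∀ z₁ ∈ sphere (xm : ℂ) Rm,
      (∮ z₂ in C((xn : ℂ), Rn), -(B z₁ * B z₂) / (z₁ - z₂) ^ 2) =
        -(B z₁) * ((2 * (π : ℂ) * Complex.I) *
          ∑ l ∈ 𝒩n, (ρ l : ℂ) ^ 2 / K * ((z₁ - (ρ l : ℂ)) ^ 2)⁻¹) := by
    intro z₁ hz₁
    have hz₁' : z₁ ∉ closedBall (xn : ℂ) Rn :=
      Set.disjoint_left.1 hballs (sphere_subset_closedBall hz₁)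
    have step1 : (∮ z₂ in C((xn : ℂ), Rn), -(B z₁ * B z₂) / (z₁ - z₂) ^ 2) =
        -(B z₁) * ∮ z₂ in C((xn : ℂ), Rn), B z₂ * ((z₁ - z₂) ^ 2)⁻¹ := by
      rw [← circleIntegral.integral_const_mul]
      congr 1
      funext z₂
      rw [div_eq_mul_inv]
      ring
    rw [step1, key_integral N K ρ B hBalt 𝒩n xn Rn hRn z₁ hz₁' hin_n hout_n hsph_n]
  -- rewrite the outer integrand
  set f2 : Fin N → ℂ → ℂ := fun l z₁ =>
    (-(ρ l : ℂ) ^ 2 / K) * (B z₁ * (((ρ l : ℂ) - z₁) ^ 2)⁻¹) with hf2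
  have houter : (∮ z₁ in C((xm : ℂ), Rm), ∮ z₂ in C((xn : ℂ), Rn),
      -(B z₁ * B z₂) / (z₁ - z₂) ^ 2) =
      ∮ z₁ in C((xm : ℂ), Rm), (2 * (π : ℂ) * Complex.I) * ∑ l ∈ 𝒩n, f2 l z₁ := by
    apply circleIntegral.integral_congr hRm.le
    intro z₁ hz₁
    dsimp only
    rw [inner z₁ hz₁]
    have hterm : ∀ l ∈ 𝒩n, f2 l z₁ =
        -(B z₁) * ((ρ l : ℂ) ^ 2 / K * ((z₁ - (ρ l : ℂ)) ^ 2)⁻¹) := by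
      intro l _
      simp only [hf2]
      rw [show ((ρ l : ℂ) - z₁) ^ 2 = (z₁ - (ρ l : ℂ)) ^ 2 by ring]
      ring
    rw [Finset.sum_congr rfl hterm, ← Finset.mul_sum]
    ring
  -- integrability of each f2 l on C_m
  have hf2int : ∀ l ∈ 𝒩n, CircleIntegrable (f2 l) (xm : ℂ) Rm := by
    intro l hl
    apply ContinuousOn.circleIntegrable hRm.le
    apply ContinuousOn.mul continuousOn_const
    apply ContinuousOn.mul hBcont
    apply ContinuousOn.inv₀ ((continuousOn_const.sub continuousOn_id).pow 2)
    intro z hz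
    apply pow_ne_zero
    apply sub_ne_zero.2
    intro h
    have h1 : ((ρ l : ℂ)) ∈ closedBall (xn : ℂ) Rn := ball_subset_closedBall (hin_n l hl)
    have h2 : ((ρ l : ℂ)) ∈ closedBall (xm : ℂ) Rm := (show (ρ l : ℂ) = z from h) ▸ sphere_subset_closedBall hz
    exact Set.disjoint_left.1 hballs h2 h1
  -- evaluate each ∮ f2 l
  have hf2val : ∀ l ∈ 𝒩n, (∮ z₁ in C((xm : ℂ), Rm), f2 l z₁) =
      (-(ρ l : ℂ) ^ 2 / K) * ((2 * (π : ℂ) * Complex.I) *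
        ∑ k ∈ 𝒩m, (ρ k : ℂ) ^ 2 / K * (((ρ l : ℂ) - (ρ k : ℂ)) ^ 2)⁻¹) := by
    intro l hl
    have hl' : ((ρ l : ℂ)) ∉ closedBall (xm : ℂ) Rm := by
      intro h
      exact Set.disjoint_left.1 hballs h (ball_subset_closedBall (hin_n l hl))
    simp only [hf2]
    rw [circleIntegral.integral_const_mul]
    rw [key_integral N K ρ B hBalt 𝒩m xm Rm hRm ((ρ l : ℂ)) hl' hin_m hout_m hsph_m]
  -- put it all together
  rw [houter, circleIntegral.integral_const_mul,
    circleIntegral_finsetSum 𝒩n f2 hf2int]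
  rw [Finset.sum_congr rfl hf2val]
  have h2πI : (2 * (π : ℂ) * Complex.I) ≠ 0 := by
    simp [Real.pi_ne_zero, Complex.I_ne_zero]
  -- rewrite RHS as iterated sum over l then k
  rw [show -(1 / (K : ℂ) ^ 2) * ∑ k ∈ 𝒩m, ∑ l ∈ 𝒩n,
        (ρ k : ℂ) ^ 2 * (ρ l : ℂ) ^ 2 / ((ρ k : ℂ) - (ρ l : ℂ)) ^ 2
      = ∑ l ∈ 𝒩n, ∑ k ∈ 𝒩m, -(1 / (K : ℂ) ^ 2) *
        ((ρ k : ℂ) ^ 2 * (ρ l : ℂ) ^ 2 / ((ρ k : ℂ) - (ρ l : ℂ)) ^ 2) by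
    rw [Finset.sum_comm (s := 𝒩n) (t := 𝒩m), Finset.mul_sum]
    exact Finset.sum_congr rfl fun k _ => Finset.mul_sum _ _ _]
  rw [Finset.mul_sum, Finset.mul_sum]
  apply Finset.sum_congr rfl
  intro l hl
  rw [show (1 / (2 * (π : ℂ) * Complex.I)) ^ 2 * (2 * (π : ℂ) * Complex.I *
      ((-(ρ l : ℂ) ^ 2 / K) * ((2 * (π : ℂ) * Complex.I) *
        ∑ k ∈ 𝒩m, (ρ k : ℂ) ^ 2 / K * (((ρ l : ℂ) - (ρ k : ℂ)) ^ 2)⁻¹)))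
      = (-(ρ l : ℂ) ^ 2 / K) *
        ∑ k ∈ 𝒩m, (ρ k : ℂ) ^ 2 / K * (((ρ l : ℂ) - (ρ k : ℂ)) ^ 2)⁻¹ by
    field_simp]
  rw [Finset.mul_sum]
  apply Finset.sum_congr rfl
  intro k hk
  have hkl : k ≠ l := fun h => (Finset.disjoint_left.1 hdisj hk) (h ▸ hl)
  have hρne : (ρ k : ℂ) - (ρ l : ℂ) ≠ 0 := by
    rw [sub_ne_zero]
    exact_mod_cast fun h => hkl (hinj h)
  have hsq : ((ρ k : ℂ) - (ρ l : ℂ)) ^ 2 ≠ 0 := pow_ne_zero 2 hρne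
  rw [show ((ρ l : ℂ) - (ρ k : ℂ)) ^ 2 = ((ρ k : ℂ) - (ρ l : ℂ)) ^ 2 by ring]
  field_simp
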